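/- Let a = (−1, 0) and b = (1, 0), and let m be a point on the upper half of the ellipse x² + y²/k² = 1 (with 0 < k < 1, y ≥ 0). Then |am| + |mb| ≤ 2√(1 + k²), with equality if and only if m = (0, k). -/
import Mathlib


set_option maxHeartbeats 1600000 in
/-- For `a = (−1,0)`, `b = (1,0)` and `m` on the upper half of the ellipse
`x² + y²/k² = 1` (`0 < k < 1`), `|am| + |mb| ≤ 2√(1 + k²)`, with equality
iff `m = (0, k)`. -/
theorem stmt10 (k : ℝ) (hk0 : 0 < k) (hk1 : k < 1)
    (a b m : EuclideanSpace ℝ (Fin 2))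
    (ha : a 0 = -1 ∧ a 1 = 0) (hb : b 0 = 1 ∧ b 1 = 0)
    (hm : (m 0) ^ 2 + (m 1) ^ 2 / k ^ 2 = 1) (hm' : 0 ≤ m 1) :
    dist a m + dist m b ≤ 2 * Real.sqrt (1 + k ^ 2) ∧
      (dist a m + dist m b = 2 * Real.sqrt (1 + k ^ 2) ↔ m 0 = 0 ∧ m 1 = k) := by
  obtain ⟨ha0, ha1⟩ := ha
  obtain ⟨hb0, hb1⟩ := hb
  set x := m 0 with hx
  set y := m 1 with hyy
  have hk2 : (0:ℝ) < k ^ 2 := by positivity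
  have hy2 : y ^ 2 = k ^ 2 * (1 - x ^ 2) := by
    field_simp at hm
    nlinarith [hm]
  have hx2 : x ^ 2 ≤ 1 := by nlinarith [sq_nonneg y]
  have hs0 : (0:ℝ) < 1 + k ^ 2 := by positivity
  set s := Real.sqrt (1 + k ^ 2) with hs
  have hspos : 0 < s := Real.sqrt_pos.mpr hs0
  have hs2 : s ^ 2 = 1 + k ^ 2 := Real.sq_sqrt hs0.le
  have hda : dist a m = Real.sqrt ((1 - k ^ 2) * x ^ 2 + 2 * x + 1 + k ^ 2) := by
    rw [EuclideanSpace.dist_eq]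
    congr 1
    rw [Fin.sum_univ_two, ha0, ha1, Real.dist_eq, Real.dist_eq, sq_abs, sq_abs, ← hx, ← hyy]
    linear_combination hy2
  have hdb : dist m b = Real.sqrt ((1 - k ^ 2) * (-x) ^ 2 + 2 * (-x) + 1 + k ^ 2) := by
    rw [EuclideanSpace.dist_eq]
    congr 1
    rw [Fin.sum_univ_two, hb0, hb1, Real.dist_eq, Real.dist_eq, sq_abs, sq_abs, ← hx, ← hyy]
    linear_combination hy2
  have bound : ∀ t : ℝ, t ^ 2 ≤ 1 →
      s * Real.sqrt ((1 - k ^ 2) * t ^ 2 + 2 * t + 1 + k ^ 2) ≤ 1 + k ^ 2 + t := by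
    intro t ht
    have hP : 0 ≤ (1 - k ^ 2) * t ^ 2 + 2 * t + 1 + k ^ 2 := by
      nlinarith [sq_nonneg (t + 1)]
    rw [hs, ← Real.sqrt_mul hs0.le]
    have h2 : (1 + k ^ 2) * ((1 - k ^ 2) * t ^ 2 + 2 * t + 1 + k ^ 2) ≤ (1 + k ^ 2 + t) ^ 2 := by
      nlinarith [sq_nonneg (k ^ 2 * t)]
    have ht1 : (0:ℝ) ≤ 1 + k ^ 2 + t := by nlinarith [sq_nonneg (t + 1)]
    calc Real.sqrt ((1 + k ^ 2) * ((1 - k ^ 2) * t ^ 2 + 2 * t + 1 + k ^ 2))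
        ≤ Real.sqrt ((1 + k ^ 2 + t) ^ 2) := Real.sqrt_le_sqrt h2
      _ = 1 + k ^ 2 + t := Real.sqrt_sq ht1
  have hxneg : (-x) ^ 2 ≤ 1 := by nlinarith
  have b1 := bound x hx2
  have b2 := bound (-x) hxneg
  have hPnn := Real.sqrt_nonneg ((1 - k ^ 2) * x ^ 2 + 2 * x + 1 + k ^ 2)
  have hQnn := Real.sqrt_nonneg ((1 - k ^ 2) * (-x) ^ 2 + 2 * (-x) + 1 + k ^ 2)
  have hle : dist a m + dist m b ≤ 2 * s := by
    rw [hda, hdb]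
    have h3 : s * (Real.sqrt ((1 - k ^ 2) * x ^ 2 + 2 * x + 1 + k ^ 2) +
        Real.sqrt ((1 - k ^ 2) * (-x) ^ 2 + 2 * (-x) + 1 + k ^ 2)) ≤ s * (2 * s) := by
      have : s * (2 * s) = 2 * s ^ 2 := by ring
      rw [this, hs2, mul_add]
      linarith [b1, b2]
    exact le_of_mul_le_mul_left h3 hspos
  refine ⟨hle, ?_, ?_⟩
  · intro heq
    have e1 : s * Real.sqrt ((1 - k ^ 2) * x ^ 2 + 2 * x + 1 + k ^ 2) = 1 + k ^ 2 + x := by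
      rw [hda, hdb] at heq
      have h4 : s * Real.sqrt ((1 - k ^ 2) * x ^ 2 + 2 * x + 1 + k ^ 2) +
          s * Real.sqrt ((1 - k ^ 2) * (-x) ^ 2 + 2 * (-x) + 1 + k ^ 2) = 2 * s ^ 2 := by
        rw [← mul_add, heq]; ring
      rw [hs2] at h4
      linarith [b1, b2]
    have hP : 0 ≤ (1 - k ^ 2) * x ^ 2 + 2 * x + 1 + k ^ 2 := by
      nlinarith [sq_nonneg (x + 1)]
    have e2 : (1 + k ^ 2) * ((1 - k ^ 2) * x ^ 2 + 2 * x + 1 + k ^ 2) = (1 + k ^ 2 + x) ^ 2 := by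
      have := congrArg (· ^ 2) e1
      simp only [mul_pow] at this
      rw [Real.sq_sqrt hP, hs2] at this
      linarith [this]
    have h5 : k ^ 4 * x ^ 2 = 0 := by linear_combination -e2
    have hxx : x ^ 2 = 0 := (mul_eq_zero.mp h5).resolve_left (by positivity : (0:ℝ) < k ^ 4).ne'
    have hx0 : x = 0 := pow_eq_zero_iff (by norm_num) |>.mp hxx
    refine ⟨hx0, ?_⟩
    have : y ^ 2 = k ^ 2 := by rw [hy2, hx0]; ring
    nlinarith [this, hm', hk0]
  · rintro ⟨hx0, hyk⟩
    rw [hda, hdb, hx0]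
    norm_num
    rw [hs]
    ring
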